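/- Let N ≥ 2, let a_1, …, a_N be pairwise distinct real numbers, and let (z_1^0, z_2^0, z_3^0) ∈ ℝ³ ∖ {0}. Define F_j(p,q) = ∑_{k ≠ j} (p_k q_j − p_j q_k)^2/(a_k − a_j) for j = 1, …, N−1 and G(p,q) = z_1^0 ∑_j p_j q_j + z_2^0 ∑_j p_j^2 + z_3^0 ∑_j q_j^2. Then the set of points (p,q) ∈ ℝ^N × ℝ^N at which the N differentials dF_1(p,q), …, dF_{N−1}(p,q), dG(p,q) (elements of the dual space of ℝ^{2N}) are linearly independent is open and dense in ℝ^{2N}; i.e. {F_1, …, F_{N−1}, G} is a complete involutive set of functions for the standard Poisson structure on ℝ^{2N}. -/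

import Mathlib

open Finset

/-- The Gaudin function `F_j(p,q) = ∑_{k ≠ j} (p_k q_j − p_j q_k)^2/(a_k − a_j)`. -/
noncomputable def gaudinF (N : ℕ) (a : Fin N → ℝ) (j : Fin N)
    (x : (Fin N → ℝ) × (Fin N → ℝ)) : ℝ :=
  ∑ k ∈ Finset.univ.erase j, (x.1 k * x.2 j - x.1 j * x.2 k) ^ 2 / (a k - a j)

/-- `G(p,q) = z₁⁰ ∑ p_j q_j + z₂⁰ ∑ p_j² + z₃⁰ ∑ q_j²`. -/
noncomputable def gaudinG (N : ℕ) (z₁ z₂ z₃ : ℝ)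
    (x : (Fin N → ℝ) × (Fin N → ℝ)) : ℝ :=
  z₁ * ∑ j, x.1 j * x.2 j + z₂ * ∑ j, (x.1 j) ^ 2 + z₃ * ∑ j, (x.2 j) ^ 2

/-- The family `F_1, …, F_{N−1}, G` indexed by `Fin N`. -/
noncomputable def gaudinFam (N : ℕ) (a : Fin N → ℝ) (z₁ z₂ z₃ : ℝ) (i : Fin N) :
    (Fin N → ℝ) × (Fin N → ℝ) → ℝ :=
  if (i : ℕ) < N - 1 then gaudinF N a i else gaudinG N z₁ z₂ z₃

/-- The set of points where the differentials `dF_1, …, dF_{N−1}, dG` are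
linearly independent. -/
noncomputable def indepSet (N : ℕ) (a : Fin N → ℝ) (z₁ z₂ z₃ : ℝ) :
    Set ((Fin N → ℝ) × (Fin N → ℝ)) :=
  {x | LinearIndependent ℝ fun i : Fin N => fderiv ℝ (gaudinFam N a z₁ z₂ z₃ i) x}

namespace Gaudin

variable {N : ℕ}

noncomputable def Pc (N : ℕ) (k : Fin N) : ((Fin N → ℝ) × (Fin N → ℝ)) →L[ℝ] ℝ :=
  (ContinuousLinearMap.proj k).comp (ContinuousLinearMap.fst ℝ (Fin N → ℝ) (Fin N → ℝ))

noncomputable def Qc (N : ℕ) (k : Fin N) : ((Fin N → ℝ) × (Fin N → ℝ)) →L[ℝ] ℝ :=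
  (ContinuousLinearMap.proj k).comp (ContinuousLinearMap.snd ℝ (Fin N → ℝ) (Fin N → ℝ))

@[simp] lemma Pc_apply (k : Fin N) (v) : Pc N k v = v.1 k := rfl
@[simp] lemma Qc_apply (k : Fin N) (v) : Qc N k v = v.2 k := rfl

lemma hasP (k : Fin N) (x : (Fin N → ℝ) × (Fin N → ℝ)) :
    HasFDerivAt (fun y : (Fin N → ℝ) × (Fin N → ℝ) => y.1 k) (Pc N k) x :=
  (Pc N k).hasFDerivAt

lemma hasQ (k : Fin N) (x : (Fin N → ℝ) × (Fin N → ℝ)) :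
    HasFDerivAt (fun y : (Fin N → ℝ) × (Fin N → ℝ) => y.2 k) (Qc N k) x :=
  (Qc N k).hasFDerivAt

noncomputable def Wm (j k : Fin N) (x : (Fin N → ℝ) × (Fin N → ℝ)) :
    ((Fin N → ℝ) × (Fin N → ℝ)) →L[ℝ] ℝ :=
  (x.1 k • Qc N j + x.2 j • Pc N k) - (x.1 j • Qc N k + x.2 k • Pc N j)

lemma hasW (j k : Fin N) (x : (Fin N → ℝ) × (Fin N → ℝ)) :
    HasFDerivAt (fun y : (Fin N → ℝ) × (Fin N → ℝ) => y.1 k * y.2 j - y.1 j * y.2 k)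
      (Wm j k x) x :=
  ((hasP k x).mul (hasQ j x)).sub ((hasP j x).mul (hasQ k x))

noncomputable def DF (a : Fin N → ℝ) (j : Fin N) (x : (Fin N → ℝ) × (Fin N → ℝ)) :
    ((Fin N → ℝ) × (Fin N → ℝ)) →L[ℝ] ℝ :=
  ∑ k ∈ Finset.univ.erase j,
    (a k - a j)⁻¹ • ((x.1 k * x.2 j - x.1 j * x.2 k) • Wm j k x
      + (x.1 k * x.2 j - x.1 j * x.2 k) • Wm j k x)

lemma hasFDerivAt_gaudinF (a : Fin N → ℝ) (j : Fin N) (x : (Fin N → ℝ) × (Fin N → ℝ)) :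
    HasFDerivAt (gaudinF N a j) (DF a j x) x := by
  have : gaudinF N a j = fun y : (Fin N → ℝ) × (Fin N → ℝ) =>
      ∑ k ∈ Finset.univ.erase j,
        ((y.1 k * y.2 j - y.1 j * y.2 k) * (y.1 k * y.2 j - y.1 j * y.2 k)) * (a k - a j)⁻¹ := by
    funext y
    unfold gaudinF
    exact Finset.sum_congr rfl fun k _ => by ring
  rw [this]
  exact HasFDerivAt.fun_sum fun k _ =>
    ((hasW j k x).mul (hasW j k x)).mul_const ((a k - a j)⁻¹)

lemma DF_apply (a : Fin N → ℝ) (j : Fin N) (x v : (Fin N → ℝ) × (Fin N → ℝ)) :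
    DF a j x v = ∑ k ∈ Finset.univ.erase j,
      2 * ((x.1 k * x.2 j - x.1 j * x.2 k) / (a k - a j)) *
        (x.1 k * v.2 j + x.2 j * v.1 k - x.1 j * v.2 k - x.2 k * v.1 j) := by
  simp only [DF, Wm, ContinuousLinearMap.sum_apply, ContinuousLinearMap.smul_apply,
    ContinuousLinearMap.add_apply, ContinuousLinearMap.sub_apply, Pc_apply, Qc_apply,
    smul_eq_mul]
  exact Finset.sum_congr rfl fun k _ => by ring

noncomputable def DG (z₁ z₂ z₃ : ℝ) (x : (Fin N → ℝ) × (Fin N → ℝ)) :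
    ((Fin N → ℝ) × (Fin N → ℝ)) →L[ℝ] ℝ :=
  ∑ j : Fin N, (z₁ • (x.1 j • Qc N j + x.2 j • Pc N j)
    + (z₂ • (x.1 j • Pc N j + x.1 j • Pc N j) + z₃ • (x.2 j • Qc N j + x.2 j • Qc N j)))

lemma hasFDerivAt_gaudinG (z₁ z₂ z₃ : ℝ) (x : (Fin N → ℝ) × (Fin N → ℝ)) :
    HasFDerivAt (gaudinG N z₁ z₂ z₃) (DG z₁ z₂ z₃ x) x := by
  have : gaudinG N z₁ z₂ z₃ = fun y : (Fin N → ℝ) × (Fin N → ℝ) =>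
      ∑ j : Fin N, (z₁ * (y.1 j * y.2 j) + (z₂ * (y.1 j * y.1 j) + z₃ * (y.2 j * y.2 j))) := by
    funext y
    unfold gaudinG
    rw [Finset.mul_sum, Finset.mul_sum, Finset.mul_sum, ← Finset.sum_add_distrib,
      ← Finset.sum_add_distrib]
    exact Finset.sum_congr rfl fun j _ => by ring
  rw [this]
  exact HasFDerivAt.fun_sum fun j _ =>
    (((hasP j x).mul (hasQ j x)).const_mul z₁).add
      ((((hasP j x).mul (hasP j x)).const_mul z₂).add
        (((hasQ j x).mul (hasQ j x)).const_mul z₃))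

lemma DG_apply (z₁ z₂ z₃ : ℝ) (x v : (Fin N → ℝ) × (Fin N → ℝ)) :
    DG z₁ z₂ z₃ x v = ∑ j : Fin N,
      ((z₁ * x.2 j + 2 * z₂ * x.1 j) * v.1 j + (z₁ * x.1 j + 2 * z₃ * x.2 j) * v.2 j) := by
  simp only [DG, ContinuousLinearMap.sum_apply, ContinuousLinearMap.smul_apply,
    ContinuousLinearMap.add_apply, Pc_apply, Qc_apply, smul_eq_mul]
  exact Finset.sum_congr rfl fun j _ => by ring

noncomputable def Dfam (a : Fin N → ℝ) (z₁ z₂ z₃ : ℝ) (i : Fin N)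
    (x : (Fin N → ℝ) × (Fin N → ℝ)) : ((Fin N → ℝ) × (Fin N → ℝ)) →L[ℝ] ℝ :=
  if (i : ℕ) < N - 1 then DF a i x else DG z₁ z₂ z₃ x

lemma hasFDerivAt_fam (a : Fin N → ℝ) (z₁ z₂ z₃ : ℝ) (i : Fin N)
    (x : (Fin N → ℝ) × (Fin N → ℝ)) :
    HasFDerivAt (gaudinFam N a z₁ z₂ z₃ i) (Dfam a z₁ z₂ z₃ i x) x := by
  unfold gaudinFam Dfam
  split
  · exact hasFDerivAt_gaudinF a i x
  · exact hasFDerivAt_gaudinG z₁ z₂ z₃ x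

lemma fderiv_fam (a : Fin N → ℝ) (z₁ z₂ z₃ : ℝ) (i : Fin N)
    (x : (Fin N → ℝ) × (Fin N → ℝ)) :
    fderiv ℝ (gaudinFam N a z₁ z₂ z₃ i) x = Dfam a z₁ z₂ z₃ i x :=
  (hasFDerivAt_fam a z₁ z₂ z₃ i x).fderiv

lemma contP (k : Fin N) : Continuous (fun y : (Fin N → ℝ) × (Fin N → ℝ) => y.1 k) :=
  (continuous_apply k).comp continuous_fst

lemma contQ (k : Fin N) : Continuous (fun y : (Fin N → ℝ) × (Fin N → ℝ) => y.2 k) :=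
  (continuous_apply k).comp continuous_snd

lemma cont_DF (a : Fin N → ℝ) (j : Fin N) : Continuous (DF a j) := by
  unfold DF Wm
  refine continuous_finset_sum _ fun k _ => Continuous.fun_const_smul ?_ _
  have hw : Continuous (fun x : (Fin N → ℝ) × (Fin N → ℝ) => x.1 k * x.2 j - x.1 j * x.2 k) :=
    ((contP k).mul (contQ j)).sub ((contP j).mul (contQ k))
  have hW : Continuous (fun x : (Fin N → ℝ) × (Fin N → ℝ) =>
      (x.1 k • Qc N j + x.2 j • Pc N k) - (x.1 j • Qc N k + x.2 k • Pc N j)) :=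
    (((contP k).smul continuous_const).add ((contQ j).smul continuous_const)).sub
      (((contP j).smul continuous_const).add ((contQ k).smul continuous_const))
  exact (hw.smul hW).add (hw.smul hW)

lemma cont_DG (z₁ z₂ z₃ : ℝ) : Continuous (DG (N := N) z₁ z₂ z₃) := by
  unfold DG
  refine continuous_finset_sum _ fun j _ => ?_
  refine (Continuous.fun_const_smul (((contP j).smul continuous_const).add
    ((contQ j).smul continuous_const)) _).add ?_
  exact (Continuous.fun_const_smul (((contP j).smul continuous_const).add
    ((contP j).smul continuous_const)) _).add
    (Continuous.fun_const_smul (((contQ j).smul continuous_const).add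
    ((contQ j).smul continuous_const)) _)

lemma cont_Dfam (a : Fin N → ℝ) (z₁ z₂ z₃ : ℝ) (i : Fin N) :
    Continuous (Dfam a z₁ z₂ z₃ i) := by
  unfold Dfam
  split
  · exact cont_DF a i
  · exact cont_DG z₁ z₂ z₃

lemma isOpen_indep (a : Fin N → ℝ) (z₁ z₂ z₃ : ℝ) :
    IsOpen {x : (Fin N → ℝ) × (Fin N → ℝ) |
      LinearIndependent ℝ fun i : Fin N => Dfam a z₁ z₂ z₃ i x} := by
  have : Continuous (fun x : (Fin N → ℝ) × (Fin N → ℝ) => fun i : Fin N =>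
      Dfam a z₁ z₂ z₃ i x) := continuous_pi fun i => cont_Dfam a z₁ z₂ z₃ i
  exact isOpen_setOf_linearIndependent.preimage this

lemma DF_x0 (a : Fin N → ℝ) (ha : Function.Injective a) (j : Fin N) (t : ℝ)
    (v : (Fin N → ℝ) × (Fin N → ℝ)) :
    DF a j (a, fun _ => t) v
      = 2*t*((∑ k, a k) * v.2 j - a j * (∑ k, v.2 k) + t * (∑ k, v.1 k)
          - (N:ℝ)*t*(v.1 j)) := by
  rw [DF_apply]
  have hcongr : ∑ k ∈ Finset.univ.erase j,
      2 * ((((a, fun _ => t) : (Fin N → ℝ) × (Fin N → ℝ)).1 k * ((a, fun _ => t) : (Fin N → ℝ) × (Fin N → ℝ)).2 j - ((a, fun _ => t) : (Fin N → ℝ) × (Fin N → ℝ)).1 j * ((a, fun _ => t) : (Fin N → ℝ) × (Fin N → ℝ)).2 k) / (a k - a j)) *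
        (((a, fun _ => t) : (Fin N → ℝ) × (Fin N → ℝ)).1 k * v.2 j + ((a, fun _ => t) : (Fin N → ℝ) × (Fin N → ℝ)).2 j * v.1 k - ((a, fun _ => t) : (Fin N → ℝ) × (Fin N → ℝ)).1 j * v.2 k - ((a, fun _ => t) : (Fin N → ℝ) × (Fin N → ℝ)).2 k * v.1 j)
      = ∑ k ∈ Finset.univ.erase j,
        (a k * (2*t*v.2 j) + v.1 k * (2*t*t) - v.2 k * (2*t*(a j)) - 2*t*t*(v.1 j)) := by
    refine Finset.sum_congr rfl fun k hk => ?_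
    have hne : a k - a j ≠ 0 := sub_ne_zero.2 (ha.ne (Finset.ne_of_mem_erase hk))
    field_simp
  rw [hcongr, Finset.sum_erase_eq_sub (Finset.mem_univ j)]
  rw [Finset.sum_sub_distrib, Finset.sum_sub_distrib, Finset.sum_add_distrib,
    ← Finset.sum_mul, ← Finset.sum_mul, ← Finset.sum_mul, Finset.sum_const,
    Finset.card_univ, Fintype.card_fin, nsmul_eq_mul]
  ring

lemma exists_witness (hN : 2 ≤ N) (a : Fin N → ℝ) (ha : Function.Injective a)
    (z₁ z₂ z₃ : ℝ) (hz : ¬(z₁ = 0 ∧ z₂ = 0 ∧ z₃ = 0)) :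
    ∃ x₀, LinearIndependent ℝ fun i : Fin N => Dfam a z₁ z₂ z₃ i x₀ := by
  have hNR : (N:ℝ) ≠ 0 := Nat.cast_ne_zero.mpr (by omega)
  set S := ∑ k, a k with hSdef
  set P := ∑ k, (a k)^2 with hPdef
  have hP : P ≠ 0 := by
    intro h0
    have hall : ∀ k : Fin N, (a k)^2 = 0 := fun k =>
      (Finset.sum_eq_zero_iff_of_nonneg (fun k _ => sq_nonneg (a k))).mp h0 k (Finset.mem_univ k)
    have h01 : a ⟨0, by omega⟩ = a ⟨1, by omega⟩ := by
      have e0 := (pow_eq_zero_iff (two_ne_zero)).mp (hall ⟨0, by omega⟩)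
      have e1 := (pow_eq_zero_iff (two_ne_zero)).mp (hall ⟨1, by omega⟩)
      rw [e0, e1]
    have := ha h01
    simp [Fin.ext_iff] at this
  obtain ⟨t, ht0, htd⟩ : ∃ t : ℝ, t ≠ 0 ∧
      ((N:ℝ)*t*z₁ + 2*S*z₂ ≠ 0 ∨ (N:ℝ)*t^2*z₃ - P*z₂ ≠ 0) := by
    by_contra hcon
    push_neg at hcon
    obtain ⟨h1a, h1b⟩ := hcon 1 one_ne_zero
    obtain ⟨h2a, h2b⟩ := hcon 2 two_ne_zero
    have hz1 : z₁ = 0 := by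
      have hN1 : (N:ℝ) * z₁ = 0 := by linear_combination h2a - h1a
      exact (mul_eq_zero.mp hN1).resolve_left hNR
    have hz3 : z₃ = 0 := by
      have h3 : (N:ℝ) * (3 * z₃) = 0 := by linear_combination h2b - h1b
      have := (mul_eq_zero.mp h3).resolve_left hNR
      linarith
    have hz2 : z₂ = 0 := by
      have hp2 : P * z₂ = 0 := by linear_combination (N:ℝ)*hz3 - h1b
      exact (mul_eq_zero.mp hp2).resolve_left hP
    exact hz ⟨hz1, hz2, hz3⟩
  refine ⟨(a, fun _ => t), ?_⟩
  rw [Fintype.linearIndependent_iff]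
  intro g hg
  set m : Fin N := ⟨N-1, by omega⟩ with hm
  have hltm : ∀ i : Fin N, i ≠ m → (i:ℕ) < N - 1 := by
    intro i hi
    have h1 : (i:ℕ) < N := i.isLt
    have h2 : (i:ℕ) ≠ N - 1 := fun h => hi (Fin.ext h)
    omega
  have master : ∀ v : (Fin N → ℝ) × (Fin N → ℝ),
      (∑ j ∈ Finset.univ.erase m, g j *
        (2*t*(S * v.2 j - a j * (∑ k, v.2 k) + t * (∑ k, v.1 k) - (N:ℝ)*t*(v.1 j))))
      + g m * (∑ j, ((z₁ * t + 2 * z₂ * a j) * v.1 j + (z₁ * a j + 2 * z₃ * t) * v.2 j)) = 0 := by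
    intro v
    have h0 := congrArg (fun L : ((Fin N → ℝ) × (Fin N → ℝ)) →L[ℝ] ℝ => L v) hg
    simp only [ContinuousLinearMap.coe_sum', Finset.sum_apply, ContinuousLinearMap.coe_smul',
      Pi.smul_apply, smul_eq_mul, ContinuousLinearMap.zero_apply] at h0
    rw [← Finset.sum_erase_add _ _ (Finset.mem_univ m)] at h0
    have e1 : ∀ j ∈ Finset.univ.erase m,
        g j * (Dfam a z₁ z₂ z₃ j (a, fun _ => t) v)
        = g j * (2*t*(S * v.2 j - a j * (∑ k, v.2 k) + t * (∑ k, v.1 k) - (N:ℝ)*t*(v.1 j))) := by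
      intro j hj
      rw [Dfam, if_pos (hltm j (Finset.ne_of_mem_erase hj)), DF_x0 a ha]
    have e2 : g m * (Dfam a z₁ z₂ z₃ m (a, fun _ => t) v)
        = g m * (∑ j, ((z₁ * t + 2 * z₂ * a j) * v.1 j + (z₁ * a j + 2 * z₃ * t) * v.2 j)) := by
      rw [Dfam, if_neg (by simp only [hm]; omega), DG_apply]
    rw [Finset.sum_congr rfl e1, e2] at h0
    exact h0
  have h1 : ∀ l ∈ Finset.univ.erase m,
      -(2*(N:ℝ)*t^2*(g l)) + 2*z₂*(g m)*(a l - a m) = 0 := by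
    intro l hl
    have hlm : l ≠ m := Finset.ne_of_mem_erase hl
    have h := master (Pi.single l 1 - Pi.single m 1, 0)
    simp only [Pi.zero_apply, Finset.sum_const_zero, mul_zero, zero_mul, add_zero, zero_add,
      sub_zero, Pi.sub_apply, Finset.sum_sub_distrib, Fintype.sum_pi_single', sub_self,
      Pi.single_apply, mul_ite, mul_one, ite_mul, zero_sub, mul_neg, mul_sub,
      Finset.sum_ite_eq', Finset.mem_univ, if_true] at h
    have e3 : ∀ x ∈ Finset.univ.erase m,
        -((if x = l then g x * (2 * t * ((N:ℝ) * t)) else 0)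
          - if x = m then g x * (2 * t * ((N:ℝ) * t)) else 0)
        = -(if x = l then g x * (2 * t * ((N:ℝ) * t)) else 0) := by
      intro x hx
      rw [if_neg (Finset.ne_of_mem_erase hx), sub_zero]
    rw [Finset.sum_congr rfl e3, Finset.sum_neg_distrib, Finset.sum_ite_eq',
      if_pos (Finset.mem_erase.mpr ⟨hlm, Finset.mem_univ l⟩)] at h
    linear_combination h
  have h2 : ∀ l ∈ Finset.univ.erase m,
      2*t*S*(g l) + z₁*(g m)*(a l - a m) = 0 := by
    intro l hl
    have hlm : l ≠ m := Finset.ne_of_mem_erase hl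
    have h := master (0, Pi.single l 1 - Pi.single m 1)
    simp only [Pi.zero_apply, Finset.sum_const_zero, mul_zero, zero_mul, add_zero, zero_add,
      sub_zero, Pi.sub_apply, Finset.sum_sub_distrib, Fintype.sum_pi_single', sub_self,
      Pi.single_apply, mul_ite, mul_one, ite_mul, zero_sub, mul_neg, mul_sub,
      Finset.sum_ite_eq', Finset.mem_univ, if_true] at h
    rw [if_pos hl, if_neg (Finset.notMem_erase m _)] at h
    linear_combination h
  have h3 : 2*t*(S*(∑ j ∈ Finset.univ.erase m, g j)
        - (N:ℝ)*(∑ j ∈ Finset.univ.erase m, g j * a j))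
      + g m*(z₁*S + 2*(N:ℝ)*z₃*t) = 0 := by
    have h := master (0, fun _ => 1)
    simp only [Pi.zero_apply, Finset.sum_const_zero, mul_zero, zero_mul, add_zero, zero_add,
      sub_zero, mul_one, Finset.sum_const, Finset.card_univ, Fintype.card_fin,
      nsmul_eq_mul] at h
    have e4 : ∀ x ∈ Finset.univ.erase m, g x * (2 * t * (S - a x * (N:ℝ)))
        = g x * (2*t*S) - (g x * a x) * (2*t*(N:ℝ)) := fun x _ => by ring
    rw [Finset.sum_congr rfl e4, Finset.sum_sub_distrib, ← Finset.sum_mul, ← Finset.sum_mul,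
      Finset.sum_add_distrib, ← Finset.mul_sum, Finset.sum_const, Finset.card_univ,
      Fintype.card_fin, nsmul_eq_mul] at h
    linear_combination h
  have hSJ : ∑ l ∈ Finset.univ.erase m, a l = S - a m :=
    Finset.sum_erase_eq_sub (Finset.mem_univ m)
  have hPJ : ∑ l ∈ Finset.univ.erase m, (a l)^2 = P - (a m)^2 :=
    Finset.sum_erase_eq_sub (Finset.mem_univ m)
  have hcard : (((Finset.univ.erase m).card : ℕ) : ℝ) = (N:ℝ) - 1 := by
    rw [Finset.card_erase_of_mem (Finset.mem_univ m), Finset.card_univ, Fintype.card_fin,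
      Nat.cast_sub (by omega), Nat.cast_one]
  have hC : -(2*(N:ℝ)*t^2*(∑ j ∈ Finset.univ.erase m, g j))
      + 2*z₂*(g m)*(S - (N:ℝ)*a m) = 0 := by
    have hsum : ∑ l ∈ Finset.univ.erase m,
        (-(2*(N:ℝ)*t^2*(g l)) + 2*z₂*(g m)*(a l - a m)) = 0 :=
      Finset.sum_eq_zero h1
    rw [Finset.sum_add_distrib, Finset.sum_neg_distrib, ← Finset.mul_sum, ← Finset.mul_sum,
      Finset.sum_sub_distrib, hSJ, Finset.sum_const, nsmul_eq_mul, hcard] at hsum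
    linear_combination hsum
  have hT : -(2*(N:ℝ)*t^2*(∑ j ∈ Finset.univ.erase m, g j * a j))
      + 2*z₂*(g m)*(P - S * a m) = 0 := by
    have hsum : ∑ l ∈ Finset.univ.erase m,
        ((-(2*(N:ℝ)*t^2*(g l)) + 2*z₂*(g m)*(a l - a m)) * a l) = 0 :=
      Finset.sum_eq_zero fun l hl => by rw [h1 l hl, zero_mul]
    have e5 : ∀ l ∈ Finset.univ.erase m,
        (-(2*(N:ℝ)*t^2*(g l)) + 2*z₂*(g m)*(a l - a m)) * a l
        = (2*z₂*(g m)) * ((a l)^2) - ((g l * a l) * (2*(N:ℝ)*t^2) + (2*z₂*(g m)*(a m)) * a l) := by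
      intro l _; ring
    rw [Finset.sum_congr rfl e5, Finset.sum_sub_distrib, Finset.sum_add_distrib,
      ← Finset.mul_sum, ← Finset.sum_mul, ← Finset.mul_sum, hPJ, hSJ] at hsum
    linear_combination hsum
  have hl0mem : (⟨0, by omega⟩ : Fin N) ∈ Finset.univ.erase m :=
    Finset.mem_erase.mpr ⟨Fin.ne_of_val_ne (by simp only [hm]; omega), Finset.mem_univ _⟩
  have hd : a ⟨0, by omega⟩ - a m ≠ 0 :=
    sub_ne_zero.2 (ha.ne (Finset.ne_of_mem_erase hl0mem))
  have key : (g m * ((N:ℝ)*t*z₁ + 2*S*z₂)) * (t * (a ⟨0, by omega⟩ - a m)) = 0 := by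
    linear_combination (N:ℝ)*t^2*(h2 ⟨0, by omega⟩ hl0mem) + t*S*(h1 ⟨0, by omega⟩ hl0mem)
  have EqI : g m * ((N:ℝ)*t*z₁ + 2*S*z₂) = 0 :=
    (mul_eq_zero.mp key).resolve_right (mul_ne_zero ht0 hd)
  have key3 : (2*(N:ℝ)) * (g m * ((N:ℝ)*t^2*z₃ - P*z₂)) = 0 := by
    linear_combination (N:ℝ)*t*h3 + S*hC - (N:ℝ)*hT - S*EqI
  have EqIII : g m * ((N:ℝ)*t^2*z₃ - P*z₂) = 0 :=
    (mul_eq_zero.mp key3).resolve_left (mul_ne_zero two_ne_zero hNR)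
  have hgm : g m = 0 := by
    rcases htd with hd' | hd'
    · exact (mul_eq_zero.mp EqI).resolve_right hd'
    · exact (mul_eq_zero.mp EqIII).resolve_right hd'
  intro i
  by_cases him : i = m
  · rw [him]; exact hgm
  · have hi : i ∈ Finset.univ.erase m := Finset.mem_erase.mpr ⟨him, Finset.mem_univ i⟩
    have h := h1 i hi
    rw [hgm] at h
    have h' : (2*(N:ℝ)*t^2) * g i = 0 := by linear_combination -h
    exact (mul_eq_zero.mp h').resolve_left
      (mul_ne_zero (mul_ne_zero two_ne_zero hNR) (pow_ne_zero 2 ht0))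

lemma exists_dual (a : Fin N → ℝ) (z₁ z₂ z₃ : ℝ) (x₀ : (Fin N → ℝ) × (Fin N → ℝ))
    (hLI : LinearIndependent ℝ fun i : Fin N => Dfam a z₁ z₂ z₃ i x₀) :
    ∃ v : Fin N → (Fin N → ℝ) × (Fin N → ℝ),
      ∀ i i', Dfam a z₁ z₂ z₃ i x₀ (v i') = if i = i' then 1 else 0 := by
  set L : ((Fin N → ℝ) × (Fin N → ℝ)) →ₗ[ℝ] (Fin N → ℝ) :=
    LinearMap.pi (fun i => (Dfam a z₁ z₂ z₃ i x₀ : ((Fin N → ℝ) × (Fin N → ℝ)) →ₗ[ℝ] ℝ))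
    with hLdef
  have hsurj : Function.Surjective L := by
    rw [← LinearMap.range_eq_top]
    by_contra hne
    obtain ⟨f, hf0, hfbot⟩ := Submodule.exists_dual_map_eq_bot_of_lt_top
      (lt_top_iff_ne_top.mpr hne) inferInstance
    have hker : ∀ u, f (L u) = 0 := by
      intro u
      have hmem : f (L u) ∈ (LinearMap.range L).map f :=
        Submodule.mem_map_of_mem (LinearMap.mem_range_self L u)
      rw [hfbot] at hmem
      exact (Submodule.mem_bot ℝ).mp hmem
    have hsingle : ∀ i : Fin N, (fun j => if i = j then (1:ℝ) else 0) = Pi.single i 1 :=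
      fun i => funext fun j => by simp [Pi.single_apply, eq_comm]
    have hLapp : ∀ (u : (Fin N → ℝ) × (Fin N → ℝ)) (i : Fin N),
        L u i = Dfam a z₁ z₂ z₃ i x₀ u := fun u i => rfl
    have hrel : ∀ u, ∑ i, f (Pi.single i 1) * (Dfam a z₁ z₂ z₃ i x₀ u) = 0 := by
      intro u
      have h1 := hker u
      rw [pi_eq_sum_univ (L u), map_sum] at h1
      simp only [map_smul, smul_eq_mul, hsingle, hLapp] at h1
      rw [← h1]
      exact Finset.sum_congr rfl fun i _ => mul_comm _ _
    have hall : ∀ i, f (Pi.single i 1) = 0 := by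
      have hcoef := Fintype.linearIndependent_iff.mp hLI (fun i => f (Pi.single i 1)) ?_
      · exact hcoef
      · refine ContinuousLinearMap.ext fun u => ?_
        simp only [ContinuousLinearMap.coe_sum', Finset.sum_apply, ContinuousLinearMap.coe_smul',
          Pi.smul_apply, smul_eq_mul, ContinuousLinearMap.zero_apply]
        exact hrel u
    refine hf0 (LinearMap.ext fun w => ?_)
    rw [pi_eq_sum_univ w, map_sum]
    simp only [map_smul, smul_eq_mul, LinearMap.zero_apply, hsingle]
    exact Finset.sum_eq_zero fun i _ => by rw [hall i, mul_zero]
  refine ⟨fun i' => Function.surjInv hsurj (Pi.single i' 1), fun i i' => ?_⟩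
  have hLv : L (Function.surjInv hsurj (Pi.single i' 1)) = Pi.single i' 1 :=
    Function.surjInv_eq hsurj _
  have := congrFun hLv i
  rw [Pi.single_apply] at this
  exact this

lemma analyticAt_DF_apply (a : Fin N → ℝ) (j : Fin N) (v x : (Fin N → ℝ) × (Fin N → ℝ)) :
    AnalyticAt ℝ (fun y => DF a j y v) x := by
  have hrw : (fun y : (Fin N → ℝ) × (Fin N → ℝ) => DF a j y v) = fun y =>
      ∑ k ∈ Finset.univ.erase j, (2 * (a k - a j)⁻¹) *
        ((y.1 k * y.2 j - y.1 j * y.2 k) *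
          (y.1 k * v.2 j + y.2 j * v.1 k - y.1 j * v.2 k - y.2 k * v.1 j)) := by
    funext y
    rw [DF_apply]
    exact Finset.sum_congr rfl fun k _ => by ring
  rw [hrw]
  refine Finset.analyticAt_fun_sum _ fun k _ => analyticAt_const.mul (AnalyticAt.mul ?_ ?_)
  · exact (((Pc N k).analyticAt x).mul ((Qc N j).analyticAt x)).sub
      (((Pc N j).analyticAt x).mul ((Qc N k).analyticAt x))
  · exact (((((Pc N k).analyticAt x).mul analyticAt_const).add
      (((Qc N j).analyticAt x).mul analyticAt_const)).sub
        ((((Pc N j).analyticAt x).mul analyticAt_const))).sub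
        (((Qc N k).analyticAt x).mul analyticAt_const)

lemma analyticAt_DG_apply (z₁ z₂ z₃ : ℝ) (v x : (Fin N → ℝ) × (Fin N → ℝ)) :
    AnalyticAt ℝ (fun y => DG (N := N) z₁ z₂ z₃ y v) x := by
  have hrw : (fun y : (Fin N → ℝ) × (Fin N → ℝ) => DG (N := N) z₁ z₂ z₃ y v) = fun y =>
      ∑ j : Fin N, ((z₁ * y.2 j + 2 * z₂ * y.1 j) * v.1 j
        + (z₁ * y.1 j + 2 * z₃ * y.2 j) * v.2 j) := by
    funext y
    rw [DG_apply]
  rw [hrw]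
  refine Finset.analyticAt_fun_sum _ fun j _ => AnalyticAt.add ?_ ?_
  · exact (((analyticAt_const.mul ((Qc N j).analyticAt x)).add
      (analyticAt_const.mul ((Pc N j).analyticAt x)))).mul analyticAt_const
  · exact (((analyticAt_const.mul ((Pc N j).analyticAt x)).add
      (analyticAt_const.mul ((Qc N j).analyticAt x)))).mul analyticAt_const

lemma analyticAt_Dfam_apply (a : Fin N → ℝ) (z₁ z₂ z₃ : ℝ) (i : Fin N)
    (v x : (Fin N → ℝ) × (Fin N → ℝ)) :
    AnalyticAt ℝ (fun y => Dfam a z₁ z₂ z₃ i y v) x := by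
  unfold Dfam
  split
  · exact analyticAt_DF_apply a i v x
  · exact analyticAt_DG_apply z₁ z₂ z₃ v x

lemma analyticAt_det (a : Fin N → ℝ) (z₁ z₂ z₃ : ℝ)
    (v : Fin N → (Fin N → ℝ) × (Fin N → ℝ)) (x : (Fin N → ℝ) × (Fin N → ℝ)) :
    AnalyticAt ℝ (fun y =>
      Matrix.det (Matrix.of fun i i' => Dfam a z₁ z₂ z₃ i y (v i'))) x := by
  have hrw : (fun y : (Fin N → ℝ) × (Fin N → ℝ) =>
      Matrix.det (Matrix.of fun i i' => Dfam a z₁ z₂ z₃ i y (v i')))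
      = fun y => ∑ σ : Equiv.Perm (Fin N),
          ((Equiv.Perm.sign σ : ℤ) : ℝ) * ∏ i, Dfam a z₁ z₂ z₃ (σ i) y (v i) := by
    funext y
    rw [Matrix.det_apply]
    refine Finset.sum_congr rfl fun σ _ => ?_
    rw [Units.smul_def, zsmul_eq_mul]
    rfl
  rw [hrw]
  exact Finset.analyticAt_fun_sum _ fun σ _ => analyticAt_const.mul
    (Finset.analyticAt_fun_prod _ fun i _ => analyticAt_Dfam_apply a z₁ z₂ z₃ (σ i) (v i) x)

lemma dense_indep (hN : 2 ≤ N) (a : Fin N → ℝ) (ha : Function.Injective a)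
    (z₁ z₂ z₃ : ℝ) (hz : ¬(z₁ = 0 ∧ z₂ = 0 ∧ z₃ = 0)) :
    Dense {x : (Fin N → ℝ) × (Fin N → ℝ) |
      LinearIndependent ℝ fun i : Fin N => Dfam a z₁ z₂ z₃ i x} := by
  obtain ⟨x₀, hx₀⟩ := exists_witness hN a ha z₁ z₂ z₃ hz
  obtain ⟨v, hv⟩ := exists_dual a z₁ z₂ z₃ x₀ hx₀
  set φ : ((Fin N → ℝ) × (Fin N → ℝ)) → ℝ := fun y =>
    Matrix.det (Matrix.of fun i i' => Dfam a z₁ z₂ z₃ i y (v i')) with hφdef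
  have hφx₀ : φ x₀ = 1 := by
    have hmat : (Matrix.of fun i i' => Dfam a z₁ z₂ z₃ i x₀ (v i'))
        = (1 : Matrix (Fin N) (Fin N) ℝ) := by
      ext i i'
      rw [Matrix.of_apply, hv i i', Matrix.one_apply]
    rw [hφdef]
    simp only [hmat, Matrix.det_one]
  have hsub : {x | φ x ≠ 0} ⊆ {x : (Fin N → ℝ) × (Fin N → ℝ) |
      LinearIndependent ℝ fun i : Fin N => Dfam a z₁ z₂ z₃ i x} := by
    intro x hx
    rw [Set.mem_setOf_eq] at hx ⊢
    rw [Fintype.linearIndependent_iff]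
    intro g hg
    by_contra hgne
    push_neg at hgne
    obtain ⟨i₀, hi₀⟩ := hgne
    have hvm : Matrix.vecMul g (Matrix.of fun i i' => Dfam a z₁ z₂ z₃ i x (v i')) = 0 := by
      funext i'
      have h1 := congrArg (fun L : ((Fin N → ℝ) × (Fin N → ℝ)) →L[ℝ] ℝ => L (v i')) hg
      simp only [ContinuousLinearMap.coe_sum', Finset.sum_apply, ContinuousLinearMap.coe_smul',
        Pi.smul_apply, smul_eq_mul, ContinuousLinearMap.zero_apply] at h1
      rw [Matrix.vecMul, Pi.zero_apply]
      rw [← h1]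
      rfl
    have hdet : Matrix.det (Matrix.of fun i i' => Dfam a z₁ z₂ z₃ i x (v i')) = 0 :=
      Matrix.exists_vecMul_eq_zero_iff.mp ⟨g, fun h => hi₀ (congrFun h i₀), hvm⟩
    exact hx hdet
  have hint : interior {x | φ x = 0} = ∅ := by
    rcases Set.eq_empty_or_nonempty (interior {x | φ x = 0}) with h | ⟨y, hy⟩
    · exact h
    · exfalso
      have hev : φ =ᶠ[nhds y] 0 :=
        Filter.eventuallyEq_of_mem (mem_interior_iff_mem_nhds.mp hy) fun z hz => hz
      have hana : AnalyticOnNhd ℝ φ Set.univ := fun z _ => analyticAt_det a z₁ z₂ z₃ v z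
      have heq := hana.eqOn_zero_of_preconnected_of_eventuallyEq_zero
        isPreconnected_univ (Set.mem_univ y) hev
      have := heq (Set.mem_univ x₀)
      rw [Pi.zero_apply] at this
      rw [hφx₀] at this
      exact one_ne_zero this
  have hdense : Dense {x | φ x ≠ 0} := interior_eq_empty_iff_dense_compl.mp hint
  exact hdense.mono hsub

end Gaudin

theorem stmt6 (N : ℕ) (hN : 2 ≤ N) (a : Fin N → ℝ) (ha : Function.Injective a)
    (z₁ z₂ z₃ : ℝ) (hz : ¬(z₁ = 0 ∧ z₂ = 0 ∧ z₃ = 0)) :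
    IsOpen (indepSet N a z₁ z₂ z₃) ∧ Dense (indepSet N a z₁ z₂ z₃) := by
  have hset : indepSet N a z₁ z₂ z₃
      = {x : (Fin N → ℝ) × (Fin N → ℝ) |
          LinearIndependent ℝ fun i : Fin N => Gaudin.Dfam a z₁ z₂ z₃ i x} := by
    unfold indepSet
    ext x
    have hfun : (fun i : Fin N => fderiv ℝ (gaudinFam N a z₁ z₂ z₃ i) x)
        = fun i : Fin N => Gaudin.Dfam a z₁ z₂ z₃ i x :=
      funext fun i => Gaudin.fderiv_fam a z₁ z₂ z₃ i x
    rw [Set.mem_setOf_eq, Set.mem_setOf_eq, hfun]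
  rw [hset]
  exact ⟨Gaudin.isOpen_indep a z₁ z₂ z₃, Gaudin.dense_indep hN a ha z₁ z₂ z₃ hz⟩
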